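/- Let n ≥ 5 and let G be a connected graph on n vertices with exactly n−3 cut vertices. Then ε(G) ≤ ε(U_{n,3}^l) = ⌊(3n² − 4n − 3)/4⌋. -/

import Mathlib

open SimpleGraph

/-- The eccentricity of a vertex: maximum distance to any vertex. -/
noncomputable def ecc {V : Type*} (G : SimpleGraph V) (v : V) : ℕ :=
  ⨆ u, G.dist v u

/-- The total eccentricity index: sum of eccentricities of all vertices. -/
noncomputable def totalEcc {V : Type*} [Fintype V] (G : SimpleGraph V) : ℕ :=
  ∑ v, ecc G v

/-- A pendant vertex: a vertex of degree one, i.e. with exactly one neighbour. -/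
def IsPendant {V : Type*} (G : SimpleGraph V) (v : V) : Prop :=
  ∃! u, G.Adj v u

/-- A cut vertex: a vertex whose removal disconnects the graph. -/
def IsCutVertex {V : Type*} (G : SimpleGraph V) (w : V) : Prop :=
  ¬ (G.induce {v | v ≠ w}).Connected

/-- distance between two subgraphs -/
noncomputable def subgraphDist {V : Type*} (G : SimpleGraph V) (B B' : G.Subgraph) : ℕ :=
  sInf {d | ∃ u ∈ B.verts, ∃ w ∈ B'.verts, G.dist u w = d}

/-- A 2-connected subgraph: at least two vertices, connected, and no cut vertex. -/
def TwoConn {V : Type*} {G : SimpleGraph V} (H : G.Subgraph) : Prop :=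
  2 ≤ H.verts.ncard ∧ H.coe.Connected ∧ ∀ w, ¬ IsCutVertex H.coe w

/-- A block: a maximal 2-connected subgraph. -/
def IsBlock {V : Type*} {G : SimpleGraph V} (H : G.Subgraph) : Prop :=
  TwoConn H ∧ ∀ H' : G.Subgraph, H ≤ H' → TwoConn H' → H' = H

/-- A pendant block: a block containing exactly one cut vertex of `G`. -/
def IsPendantBlock {V : Type*} (G : SimpleGraph V) (H : G.Subgraph) : Prop :=
  ∃! w, w ∈ H.verts ∧ IsCutVertex G w

/-- `G_{k,l}`: the graph obtained from `G` by attaching two new paths,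
with `k` resp. `l` new vertices, at the vertex `v`. -/
def attachTwoPaths {V : Type*} (G : SimpleGraph V) (v : V) (k l : ℕ) :
    SimpleGraph (V ⊕ (Fin k ⊕ Fin l)) :=
  SimpleGraph.fromRel (fun p q =>
    match p, q with
    | .inl x, .inl y => G.Adj x y
    | .inl x, .inr (.inl i) => x = v ∧ i.val = 0
    | .inl x, .inr (.inr i) => x = v ∧ i.val = 0
    | .inr (.inl i), .inr (.inl j) => i.val + 1 = j.val
    | .inr (.inr i), .inr (.inr j) => i.val + 1 = j.val
    | _, _ => False)

/-- The graph obtained from `H1`, `H2` and the path `P_d = v_1 v_2 … v_d` by identifying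
`u ∈ V(H1)`, `v ∈ V(H2)` and `v_1` into a single vertex.  The `Fin (d-1)` part records the
path vertices `v_2, …, v_d`. -/
def glueMid {V1 V2 : Type*} (H1 : SimpleGraph V1) (H2 : SimpleGraph V2)
    (u : V1) (v : V2) (d : ℕ) :
    SimpleGraph (V1 ⊕ ({x : V2 // x ≠ v} ⊕ Fin (d - 1))) :=
  SimpleGraph.fromRel (fun p q =>
    match p, q with
    | .inl x, .inl y => H1.Adj x y
    | .inl x, .inr (.inl y) => x = u ∧ H2.Adj v y.1
    | .inl x, .inr (.inr i) => x = u ∧ i.val = 0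
    | .inr (.inl x), .inr (.inl y) => H2.Adj x.1 y.1
    | .inr (.inr i), .inr (.inr j) => i.val + 1 = j.val
    | _, _ => False)

/-- The graph obtained from `H1`, `H2` and the path `P_d = v_1 v_2 … v_d` by identifying
`u ∈ V(H1)` with `v_1` and `v ∈ V(H2)` with `v_d`.  The `Fin (d-1)` part records the path
vertices `v_2, …, v_d` (the last one being identified with `v`). -/
def glueEnds {V1 V2 : Type*} (H1 : SimpleGraph V1) (H2 : SimpleGraph V2)
    (u : V1) (v : V2) (d : ℕ) :
    SimpleGraph (V1 ⊕ ({x : V2 // x ≠ v} ⊕ Fin (d - 1))) :=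
  SimpleGraph.fromRel (fun p q =>
    match p, q with
    | .inl x, .inl y => H1.Adj x y
    | .inl x, .inr (.inr i) => x = u ∧ i.val = 0
    | .inr (.inl x), .inr (.inl y) => H2.Adj x.1 y.1
    | .inr (.inr i), .inr (.inl y) => i.val + 1 = d - 1 ∧ H2.Adj v y.1
    | .inr (.inr i), .inr (.inr j) => i.val + 1 = j.val
    | _, _ => False)

/-- `U_{n,g}^l`: the unicyclic graph on `n` vertices obtained by joining one end vertex of
the path `P_{n-g}` to a vertex of the cycle `C_g` by an edge. -/
def UnlGraph (n g : ℕ) : SimpleGraph (Fin (n - g) ⊕ Fin g) :=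
  SimpleGraph.fromRel (fun p q =>
    match p, q with
    | .inl i, .inl j => i.val + 1 = j.val
    | .inl i, .inr j => i.val + 1 = n - g ∧ j.val = 0
    | .inr i, .inr j => i.val + 1 = j.val ∨ (i.val = 0 ∧ j.val + 1 = g)
    | _, _ => False)

/-- `U_{n,g}^p`: the unicyclic graph on `n` vertices obtained by attaching `n - g` pendant
vertices to one vertex of the cycle `C_g`. -/
def UnpGraph (n g : ℕ) : SimpleGraph (Fin g ⊕ Fin (n - g)) :=
  SimpleGraph.fromRel (fun p q =>
    match p, q with
    | .inl i, .inl j => i.val + 1 = j.val ∨ (i.val = 0 ∧ j.val + 1 = g)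
    | .inl i, .inr _ => i.val = 0
    | _, _ => False)

/-- The graph obtained by joining the vertex `u` of `H` to the pendant vertex of
`U_{r,g}^l` by an edge. -/
def joinPendant {V : Type*} (H : SimpleGraph V) (u : V) (r g : ℕ) :
    SimpleGraph (V ⊕ (Fin (r - g) ⊕ Fin g)) :=
  SimpleGraph.fromRel (fun p q =>
    match p, q with
    | .inl x, .inl y => H.Adj x y
    | .inl x, .inr (.inl i) => x = u ∧ i.val = 0
    | .inr a, .inr b => (UnlGraph r g).Adj a b
    | _, _ => False)

/-- `C_{m1,m2}^n` in the case `n = m1 + m2 - 1`: two cycles `C_{m1}` and `C_{m2}`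
sharing exactly one vertex (the vertex `0`). -/
def twoCyclesGlued (m1 m2 : ℕ) : SimpleGraph (Fin (m1 + m2 - 1)) :=
  SimpleGraph.fromRel (fun i j =>
    (i.val + 1 = j.val ∧ j.val < m1) ∨ (i.val = 0 ∧ j.val + 1 = m1)
    ∨ (i.val = 0 ∧ j.val = m1) ∨ (m1 ≤ i.val ∧ i.val + 1 = j.val)
    ∨ (i.val = 0 ∧ j.val + 2 = m1 + m2))

/-- `C_{3,3}^n` for `n > 5`: two triangles `{0,1,2}` and `{n-3,n-2,n-1}` joined by the path
`2, 3, …, n-3` (a path on `n - 4` vertices whose ends are identified with a vertex of each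
triangle). -/
def C33 (n : ℕ) : SimpleGraph (Fin n) :=
  SimpleGraph.fromRel (fun i j =>
    (i.val = 0 ∧ j.val = 1) ∨ (i.val = 0 ∧ j.val = 2) ∨ (i.val = 1 ∧ j.val = 2)
    ∨ (2 ≤ i.val ∧ i.val + 1 = j.val ∧ j.val + 3 ≤ n)
    ∨ (i.val + 3 = n ∧ j.val + 2 = n) ∨ (i.val + 2 = n ∧ j.val + 1 = n)
    ∨ (i.val + 3 = n ∧ j.val + 1 = n))

/-- `T(l, m, d)`: the tree obtained from the path `P_d` by attaching `l` pendant vertices at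
one end and `m` pendant vertices at the other end. -/
def Tlmd (l m d : ℕ) : SimpleGraph (Fin d ⊕ (Fin l ⊕ Fin m)) :=
  SimpleGraph.fromRel (fun p q =>
    match p, q with
    | .inl i, .inl j => i.val + 1 = j.val
    | .inl i, .inr (.inl _) => i.val = 0
    | .inl i, .inr (.inr _) => i.val + 1 = d
    | _, _ => False)

/-- `K_m^n(l_1, …, l_m)`: the graph obtained from the complete graph `K_m` by identifying,
for each `i`, one end vertex of a path on `l i` vertices with the `i`-th vertex of `K_m`.
The vertex `⟨i, 0⟩` is the `i`-th vertex of the complete graph. -/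
def Kmn (m : ℕ) (l : Fin m → ℕ) : SimpleGraph ((i : Fin m) × Fin (l i)) :=
  SimpleGraph.fromRel (fun p q =>
    (p.1 = q.1 ∧ p.2.val + 1 = q.2.val) ∨ (p.1 ≠ q.1 ∧ p.2.val = 0 ∧ q.2.val = 0))

/-- The graph obtained from `H`, `C_{m1}` and `C_{m2}` by identifying the vertex `w` of `H`,
a vertex of `C_{m1}` and a vertex of `C_{m2}` into one vertex. -/
def glueTwoCycles {V : Type*} (H : SimpleGraph V) (w : V) (m1 m2 : ℕ) :
    SimpleGraph (V ⊕ (Fin (m1 - 1) ⊕ Fin (m2 - 1))) :=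
  SimpleGraph.fromRel (fun p q =>
    match p, q with
    | .inl x, .inl y => H.Adj x y
    | .inl x, .inr (.inl i) => x = w ∧ (i.val = 0 ∨ i.val + 2 = m1)
    | .inl x, .inr (.inr i) => x = w ∧ (i.val = 0 ∨ i.val + 2 = m2)
    | .inr (.inl i), .inr (.inl j) => i.val + 1 = j.val
    | .inr (.inr i), .inr (.inr j) => i.val + 1 = j.val
    | _, _ => False)

/-- The graph obtained from `H` and the cycle `C_M` by identifying the vertex `w` of `H`
with one vertex of the cycle. -/
def glueOneCycle {V : Type*} (H : SimpleGraph V) (w : V) (M : ℕ) :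
    SimpleGraph (V ⊕ Fin (M - 1)) :=
  SimpleGraph.fromRel (fun p q =>
    match p, q with
    | .inl x, .inl y => H.Adj x y
    | .inl x, .inr i => x = w ∧ (i.val = 0 ∨ i.val + 2 = M)
    | .inr i, .inr j => i.val + 1 = j.val
    | _, _ => False)


-- ====================  auxiliary development  ====================

section Generic
variable {V : Type*} {G : SimpleGraph V}

lemma reach_induce_of_walk {t : V} {a b : V} (W : G.Walk a b)
    (hW : ∀ x ∈ W.support, x ≠ t) :
    (G.induce {v | v ≠ t}).Reachable
      ⟨a, hW a W.start_mem_support⟩ ⟨b, hW b W.end_mem_support⟩ := by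
  induction W with
  | nil => exact Reachable.refl _
  | @cons u v w h p ih =>
      have hu : u ≠ t := hW u (by simp [Walk.support_cons])
      have hW' : ∀ x ∈ p.support, x ≠ t := fun x hx => hW x (by simp [Walk.support_cons, hx])
      have hadj : (G.induce {v | v ≠ t}).Adj ⟨u, hu⟩ ⟨v, hW' v p.start_mem_support⟩ := by
        simpa [SimpleGraph.induce] using h
      exact (hadj.reachable).trans (ih hW')

/-- If `x,y ≠ t` and they are not reachable in `G - t`, then every walk between them visits `t`. -/
lemma mem_support_of_sep {t x y : V} (hx : x ≠ t) (hy : y ≠ t)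
    (hsep : ¬ (G.induce {v | v ≠ t}).Reachable ⟨x, hx⟩ ⟨y, hy⟩)
    (W : G.Walk x y) : t ∈ W.support := by
  by_contra h
  exact hsep (reach_induce_of_walk W (fun z hz hzt => h (by rwa [hzt] at hz)))

lemma dist_add_of_sep [DecidableEq V] (hG : G.Connected) {t x y : V} (hx : x ≠ t) (hy : y ≠ t)
    (hsep : ¬ (G.induce {v | v ≠ t}).Reachable ⟨x, hx⟩ ⟨y, hy⟩) :
    G.dist x y = G.dist x t + G.dist t y := by
  refine le_antisymm (hG.dist_triangle) ?_
  obtain ⟨W, hW⟩ := (hG x y).exists_walk_length_eq_dist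
  have ht : t ∈ W.support := mem_support_of_sep hx hy hsep W
  have h1 : G.dist x t ≤ (W.takeUntil t ht).length := dist_le _
  have h2 : G.dist t y ≤ (W.dropUntil t ht).length := dist_le _
  have h3 : (W.takeUntil t ht).length + (W.dropUntil t ht).length = W.length := by
    have := W.take_spec ht
    calc (W.takeUntil t ht).length + (W.dropUntil t ht).length
        = ((W.takeUntil t ht).append (W.dropUntil t ht)).length := (Walk.length_append _ _).symm
      _ = W.length := by rw [this]
  omega

end Generic

section Ecc
variable {V : Type*} [Fintype V] {G : SimpleGraph V}

lemma dist_le_ecc (v u : V) : G.dist v u ≤ ecc G v :=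
  le_ciSup (Set.Finite.bddAbove (Set.finite_range _)) u

lemma ecc_exists [Nonempty V] (v : V) :
    ∃ t, ecc G v = G.dist v t ∧ ∀ u, G.dist v u ≤ G.dist v t := by
  obtain ⟨t, ht⟩ := Finite.exists_max (fun u => G.dist v u)
  exact ⟨t, le_antisymm (ciSup_le ht) (dist_le_ecc v t), ht⟩

variable [DecidableEq V]

/-- A vertex farthest from `v` is not a cut vertex. -/
lemma not_cut_of_farthest (hG : G.Connected) (hcard : 2 ≤ Fintype.card V) {v t : V}
    (hmax : ∀ u, G.dist v u ≤ G.dist v t) : ¬ IsCutVertex G t := by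
  intro hcut
  -- v ≠ t
  have hvt : v ≠ t := by
    rintro rfl
    obtain ⟨y, hy⟩ := Fintype.exists_ne_of_one_lt_card hcard v
    have h1 : 0 < G.dist v y := hG.pos_dist_of_ne (Ne.symm hy)
    have h2 := hmax y
    have h3 : G.dist v v = 0 := SimpleGraph.dist_self
    omega
  -- the punctured graph is nonempty
  have hne : Nonempty {x : V // x ≠ t} := ⟨⟨v, hvt⟩⟩
  have hnp : ¬ (G.induce {x | x ≠ t}).Preconnected := by
    intro hp
    exact hcut ((connected_iff _).2 ⟨hp, ⟨⟨v, hvt⟩⟩⟩)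
  rw [SimpleGraph.Preconnected] at hnp
  push_neg at hnp
  obtain ⟨α, β, hαβ⟩ := hnp
  have hs : ∃ s : {x : V // x ≠ t}, ¬ (G.induce {x | x ≠ t}).Reachable ⟨v, hvt⟩ s := by
    by_contra h
    push_neg at h
    exact hαβ ((h α).symm.trans (h β))
  obtain ⟨s, hsr⟩ := hs
  have hdist : G.dist v s.1 = G.dist v t + G.dist t s.1 :=
    dist_add_of_sep hG hvt s.2 hsr
  have h1 : 0 < G.dist t s.1 := hG.pos_dist_of_ne (Ne.symm s.2)
  have := hmax s.1
  omega

/-- Every "component" of `G - t` (reachability class of `x`) contains a non-cut vertex. -/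
lemma comp_has_noncut (hG : G.Connected) (hcard : 2 ≤ Fintype.card V) {t x : V} (hx : x ≠ t) :
    ∃ (s : V) (hs : s ≠ t), ¬ IsCutVertex G s ∧
      (G.induce {v | v ≠ t}).Reachable ⟨x, hx⟩ ⟨s, hs⟩ := by
  classical
  set C : Set V := {s : V | ∃ h : s ≠ t, (G.induce {v | v ≠ t}).Reachable ⟨x, hx⟩ ⟨s, h⟩} with hC
  have hxC : x ∈ C := ⟨hx, Reachable.refl _⟩
  obtain ⟨s, hsC, hsmax⟩ := Set.exists_max_image C (fun s => G.dist t s)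
    (Set.toFinite C) ⟨x, hxC⟩
  obtain ⟨hst, hreach⟩ := hsC
  refine ⟨s, hst, ?_, hreach⟩
  intro hcut
  -- t is in G - s (t ≠ s)
  have hts : t ≠ s := Ne.symm hst
  have hne : Nonempty {v : V // v ≠ s} := ⟨⟨t, hts⟩⟩
  have hnp : ¬ (G.induce {v | v ≠ s}).Preconnected := by
    intro hp
    exact hcut ((connected_iff _).2 ⟨hp, ⟨⟨t, hts⟩⟩⟩)
  rw [SimpleGraph.Preconnected] at hnp
  push_neg at hnp
  obtain ⟨α, β, hαβ⟩ := hnp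
  have hy : ∃ y : {v : V // v ≠ s}, ¬ (G.induce {v | v ≠ s}).Reachable ⟨t, hts⟩ y := by
    by_contra h
    push_neg at h
    exact hαβ ((h α).symm.trans (h β))
  obtain ⟨y, hyr⟩ := hy
  have hyt : y.1 ≠ t := by
    intro h
    apply hyr
    have he : (⟨t, hts⟩ : {v : V // v ≠ s}) = y := Subtype.ext h.symm
    rw [he]
  -- every walk from t to y passes s; take a shortest path
  obtain ⟨W, hWp, hWl⟩ := hG.exists_path_of_dist t y.1
  have hsW : s ∈ W.support := mem_support_of_sep hts y.2 hyr W
  -- the tail of W from s avoids t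
  have hdisj : t ∉ (W.dropUntil s hsW).support := by
    intro htd
    have hnodup : W.support.Nodup := hWp.support_nodup
    have hsplit : W.support = (W.takeUntil s hsW).support ++ (W.dropUntil s hsW).support.tail := by
      conv_lhs => rw [← W.take_spec hsW]
      exact Walk.support_append _ _
    have hdisj2 : (W.takeUntil s hsW).support.Disjoint (W.dropUntil s hsW).support.tail := by
      rw [hsplit] at hnodup
      exact List.disjoint_of_nodup_append hnodup
    have ht1 : t ∈ (W.takeUntil s hsW).support := Walk.start_mem_support _
    have ht2 : t ∈ (W.dropUntil s hsW).support.tail := by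
      have := (W.dropUntil s hsW).support_eq_cons
      rw [this, List.mem_cons] at htd
      rcases htd with h | h
      · exact absurd h hts
      · exact h
    exact hdisj2 ht1 ht2
  have hreach2 : (G.induce {v | v ≠ t}).Reachable ⟨s, hst⟩ ⟨y.1, hyt⟩ := by
    have hav : ∀ z ∈ (W.dropUntil s hsW).support, z ≠ t := fun z hz hzt => hdisj (by rwa [hzt] at hz)
    exact reach_induce_of_walk _ hav
  have hyC : y.1 ∈ C := ⟨hyt, hreach.trans hreach2⟩
  -- distance contradiction
  have hadd : G.dist t y.1 = G.dist t s + G.dist s y.1 :=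
    dist_add_of_sep hG hts y.2 hyr
  have hpos : 0 < G.dist s y.1 := hG.pos_dist_of_ne (Ne.symm y.2)
  have := hsmax y.1 hyC
  omega

end Ecc

section Main
variable {V : Type*} [Fintype V] [DecidableEq V] {G : SimpleGraph V}

/-- distances along a walk: prefix bound -/
lemma dist_getVert_le (hG : G.Connected) {x y : V} (W : G.Walk x y) (j : ℕ) :
    G.dist x (W.getVert j) ≤ j := by
  induction j with
  | zero => simp [Walk.getVert_zero]
  | succ j ih =>
    by_cases h : j < W.length
    · have hadj := W.adj_getVert_succ h
      have h1 : G.dist (W.getVert j) (W.getVert (j+1)) ≤ 1 :=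
        SimpleGraph.dist_le (Walk.cons hadj Walk.nil)
      have h2 := hG.dist_triangle (u := x) (v := W.getVert j) (w := W.getVert (j+1))
      omega
    · push_neg at h
      have : W.getVert (j+1) = W.getVert j := by
        rw [W.getVert_of_length_le (by omega), W.getVert_of_length_le (by omega)]
      rw [this]; omega

/-- every level `j ≤ d(u,w)` is realized by some vertex -/
lemma exists_level (hG : G.Connected) (u w : V) {j : ℕ} (hj : j ≤ G.dist u w) :
    ∃ v, G.dist u v = j := by
  obtain ⟨W, hW⟩ := (hG u w).exists_walk_length_eq_dist
  refine ⟨W.getVert j, ?_⟩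
  have h1 : G.dist u (W.getVert j) ≤ j := dist_getVert_le hG W j
  have h2 : G.dist (W.getVert j) w ≤ G.dist u w - j := by
    have h3 : G.dist w (W.reverse.getVert (G.dist u w - j)) ≤ G.dist u w - j :=
      dist_getVert_le hG W.reverse _
    have h4 : W.reverse.getVert (G.dist u w - j) = W.getVert j := by
      rw [W.getVert_reverse]
      congr 1
      omega
    rw [h4] at h3
    rw [SimpleGraph.dist_comm]
    exact h3
  have h5 := hG.dist_triangle (u := u) (v := W.getVert j) (w := w)
  omega

/-- discrete intermediate value property along a walk -/
lemma walk_cross (hG : G.Connected) (u : V) {a b : V} (W : G.Walk a b) (j : ℕ)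
    (ha : G.dist u a ≤ j) (hb : j ≤ G.dist u b) :
    ∃ x ∈ W.support, G.dist u x = j := by
  induction W with
  | nil => exact ⟨_, Walk.start_mem_support _, le_antisymm ha hb⟩
  | @cons x y c h p ih =>
    by_cases hx : G.dist u x = j
    · exact ⟨x, Walk.start_mem_support _, hx⟩
    · have h1 : G.dist u y ≤ G.dist u x + 1 := by
        have := hG.dist_triangle (u := u) (v := x) (w := y)
        have : G.dist x y ≤ 1 := SimpleGraph.dist_le (Walk.cons h Walk.nil)
        have := hG.dist_triangle (u := u) (v := x) (w := y)
        omega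
      obtain ⟨v, hv, hvj⟩ := ih (show G.dist u y ≤ j by omega) hb
      exact ⟨v, by simp [Walk.support_cons, hv], hvj⟩

/-- The key pointwise bound. -/
theorem ecc_le_key (hG : G.Connected) (hcard : 5 ≤ Fintype.card V)
    {u w z : V}
    (hu : ¬ IsCutVertex G u) (hw : ¬ IsCutVertex G w) (hz : ¬ IsCutVertex G z)
    (hmem : ∀ t, ¬ IsCutVertex G t → t = u ∨ t = w ∨ t = z)
    (hm1 : G.dist u z ≤ G.dist u w) (hm2 : G.dist w z ≤ G.dist u w)
    (hq : G.dist w z ≤ G.dist u z) :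
    ∀ v, ecc G v ≤ max (G.dist u v) (G.dist u w - G.dist u v) := by
  intro v
  have hc2 : 2 ≤ Fintype.card V := by omega
  have hnev : Nonempty V := Fintype.card_pos_iff.mp (by omega)
  -- ecc is attained at a non-cut vertex
  obtain ⟨t, hecc, hmax⟩ := ecc_exists (G := G) v
  have htnc : ¬ IsCutVertex G t := by
    by_cases hvt : v = t
    · subst hvt
      have h0 : G.dist v v = 0 := SimpleGraph.dist_self
      -- all distances 0: contradiction with card ≥ 2
      obtain ⟨y, hy⟩ := Fintype.exists_ne_of_one_lt_card (by omega) v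
      have := hmax y
      have := hG.pos_dist_of_ne (Ne.symm hy)
      omega
    · exact not_cut_of_farthest hG hc2 hmax
  -- so ecc v = dist v t with t ∈ {u,w,z}
  rw [hecc]
  have htm := hmem t htnc
  -- trivial facts
  have d1 : G.dist v u = G.dist u v := SimpleGraph.dist_comm
  by_cases hvcut : IsCutVertex G v
  · -- v is a cut vertex
    have hvu : u ≠ v := fun h => (h ▸ hu) hvcut
    have hvw : w ≠ v := fun h => (h ▸ hw) hvcut
    have hvz : z ≠ v := fun h => (h ▸ hz) hvcut
    -- get an unreachable pair among u,w,z in G - v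
    have hnp : ¬ (G.induce {x | x ≠ v}).Preconnected := by
      intro hp
      exact hvcut ((connected_iff _).2 ⟨hp, ⟨⟨u, hvu⟩⟩⟩)
    rw [SimpleGraph.Preconnected] at hnp
    push_neg at hnp
    obtain ⟨α, β, hαβ⟩ := hnp
    obtain ⟨sα, hsα, hsαnc, hsαr⟩ := comp_has_noncut hG hc2 α.2
    obtain ⟨sβ, hsβ, hsβnc, hsβr⟩ := comp_has_noncut hG hc2 β.2
    have hsep0 : ¬ (G.induce {x | x ≠ v}).Reachable ⟨sα, hsα⟩ ⟨sβ, hsβ⟩ := by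
      intro h
      exact hαβ ((hsαr.trans h).trans hsβr.symm)
    -- helper notation
    have htri_uw : G.dist u w ≤ G.dist u v + G.dist v w := hG.dist_triangle
    have htri_uz : G.dist u z ≤ G.dist u v + G.dist v z := hG.dist_triangle
    have htri_wz : G.dist w z ≤ G.dist w v + G.dist v z := hG.dist_triangle
    have c1 : G.dist w v = G.dist v w := SimpleGraph.dist_comm
    have c2 : G.dist z v = G.dist v z := SimpleGraph.dist_comm
    have c3 : G.dist z u = G.dist u z := SimpleGraph.dist_comm
    have c4 : G.dist z w = G.dist w z := SimpleGraph.dist_comm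
    -- reachability case analysis
    by_cases Ruw : (G.induce {x | x ≠ v}).Reachable ⟨u, hvu⟩ ⟨w, hvw⟩
    · -- then z is separated from both u and w
      have Rzu : ¬ (G.induce {x | x ≠ v}).Reachable ⟨z, hvz⟩ ⟨u, hvu⟩ := by
        intro h
        -- then z ~ u ~ w, so all three in one class; contradicts hsep0 via membership
        have Rzw : (G.induce {x | x ≠ v}).Reachable ⟨z, hvz⟩ ⟨w, hvw⟩ := h.trans Ruw
        -- sα, sβ ∈ {u,w,z} all mutually reachable then
        have hall : ∀ (s : V) (hs : s ≠ v), s = u ∨ s = w ∨ s = z →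
            (G.induce {x | x ≠ v}).Reachable ⟨u, hvu⟩ ⟨s, hs⟩ := by
          rintro s hs (rfl | rfl | rfl)
          · exact Reachable.refl _
          · exact Ruw
          · exact h.symm
        exact hsep0 (((hall sα hsα (hmem sα hsαnc)).symm).trans (hall sβ hsβ (hmem sβ hsβnc)))
      have Rzw : ¬ (G.induce {x | x ≠ v}).Reachable ⟨z, hvz⟩ ⟨w, hvw⟩ := by
        intro h
        exact Rzu (h.trans Ruw.symm)
      have e1 : G.dist z u = G.dist z v + G.dist v u := dist_add_of_sep hG hvz hvu Rzu
      have e2 : G.dist z w = G.dist z v + G.dist v w := dist_add_of_sep hG hvz hvw Rzw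
      -- b ≤ a, c ≤ a
      rcases htm with rfl | rfl | rfl
      · rw [SimpleGraph.dist_comm]; omega
      · rw [SimpleGraph.dist_comm]; omega
      · rw [SimpleGraph.dist_comm]; omega
    · -- u and w separated by v
      have e0 : G.dist u w = G.dist u v + G.dist v w := dist_add_of_sep hG hvu hvw Ruw
      -- z is separated from u or from w
      have hzcase : ¬ (G.induce {x | x ≠ v}).Reachable ⟨z, hvz⟩ ⟨u, hvu⟩ ∨
          ¬ (G.induce {x | x ≠ v}).Reachable ⟨z, hvz⟩ ⟨w, hvw⟩ := by
        by_contra hcon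
        push_neg at hcon
        exact Ruw (hcon.1.symm.trans hcon.2)
      have hce : G.dist v z ≤ G.dist u v ∨ G.dist v z ≤ G.dist v w := by
        rcases hzcase with h | h
        · right
          have e1 : G.dist z u = G.dist z v + G.dist v u := dist_add_of_sep hG hvz hvu h
          omega
        · left
          have e2 : G.dist z w = G.dist z v + G.dist v w := dist_add_of_sep hG hvz hvw h
          omega
      rcases htm with rfl | rfl | rfl
      · rw [SimpleGraph.dist_comm]; omega
      · rw [SimpleGraph.dist_comm]; omega
      · rw [SimpleGraph.dist_comm]; omega
  · -- v is not a cut vertex: v ∈ {u,w,z}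
    have htri : G.dist u t ≤ G.dist u v + G.dist v t := hG.dist_triangle
    rcases hmem v hvcut with h | h | h
    · -- v = u
      rw [h]
      have h0 : G.dist u u = 0 := SimpleGraph.dist_self
      rcases htm with rfl | rfl | rfl
      · omega
      · omega
      · have : G.dist u t ≤ G.dist u w := hm1; omega
    · -- v = w
      rw [h]
      have h0 : G.dist w w = 0 := SimpleGraph.dist_self
      have hd : G.dist w u = G.dist u w := SimpleGraph.dist_comm
      rcases htm with rfl | rfl | rfl
      · omega
      · omega
      · have := hm2; omega
    · -- v = z
      rw [h]
      have h0 : G.dist z z = 0 := SimpleGraph.dist_self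
      have hd : G.dist z u = G.dist u z := SimpleGraph.dist_comm
      have hd2 : G.dist z w = G.dist w z := SimpleGraph.dist_comm
      rcases htm with rfl | rfl | rfl
      · omega
      · omega
      · omega

end Main

section Count
variable {V : Type*} [Fintype V] [DecidableEq V] {G : SimpleGraph V}

/-- Summing the pointwise bound over levels. -/
theorem sum_ecc_le_levels (hG : G.Connected) (u w : V) {d : ℕ} (hd : d = G.dist u w)
    (hbound : ∀ v, ecc G v ≤ max (G.dist u v) (d - G.dist u v))
    (hlev : ∀ v, G.dist u v ≤ d) :
    ∑ v, ecc G v ≤ (∑ j ∈ Finset.range (d+1), max j (d - j))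
      + (Fintype.card V - (d+1)) * d := by
  classical
  have hsurj : ∀ j : Fin (d+1), ∃ v, G.dist u v = j.1 := fun j =>
    exists_level hG u w (hd ▸ (Nat.lt_succ_iff.mp j.2))
  choose f hf using hsurj
  have hinj : Function.Injective f := by
    intro i j hij
    have : (i : ℕ) = j := by rw [← hf i, ← hf j, hij]
    exact Fin.ext this
  set s : Finset V := Finset.univ.image f with hs
  have hcards : s.card = d + 1 := by
    rw [hs, Finset.card_image_of_injective _ hinj, Finset.card_univ, Fintype.card_fin]
  have h1 : ∑ v, ecc G v ≤ ∑ v, max (G.dist u v) (d - G.dist u v) :=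
    Finset.sum_le_sum (fun v _ => hbound v)
  have hsplit : ∑ v ∈ Finset.univ, max (G.dist u v) (d - G.dist u v)
      = ∑ v ∈ s, max (G.dist u v) (d - G.dist u v)
        + ∑ v ∈ Finset.univ \ s, max (G.dist u v) (d - G.dist u v) := by
    rw [add_comm, Finset.sum_sdiff (Finset.subset_univ s)]
  have h2 : ∑ v ∈ s, max (G.dist u v) (d - G.dist u v)
      = ∑ j ∈ Finset.range (d+1), max j (d - j) := by
    rw [hs, Finset.sum_image (fun x _ y _ h => hinj h)]
    rw [← Fin.sum_univ_eq_sum_range (fun j => max j (d - j))]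
    exact Finset.sum_congr rfl (fun j _ => by rw [hf j])
  have h3 : ∑ v ∈ Finset.univ \ s, max (G.dist u v) (d - G.dist u v)
      ≤ (Fintype.card V - (d+1)) * d := by
    have hc : (Finset.univ \ s).card = Fintype.card V - (d+1) := by
      rw [Finset.card_sdiff_of_subset (Finset.subset_univ s), Finset.card_univ, hcards]
    calc ∑ v ∈ Finset.univ \ s, max (G.dist u v) (d - G.dist u v)
        ≤ (Finset.univ \ s).card • d :=
          Finset.sum_le_card_nsmul _ _ d (fun v _ => by
            have := hlev v; omega)
      _ = (Fintype.card V - (d+1)) * d := by rw [hc, smul_eq_mul]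
  omega

/-- The diameter of our graph is at most `n - 2`. -/
theorem diam_le (hG : G.Connected) (hcard5 : 5 ≤ Fintype.card V)
    (hcut : {x | IsCutVertex G x}.ncard = Fintype.card V - 3)
    (u w : V) (hlev : ∀ v, G.dist u v ≤ G.dist u w) :
    G.dist u w ≤ Fintype.card V - 2 := by
  classical
  set n := Fintype.card V with hn
  set d := G.dist u w with hd
  by_contra hcon
  push_neg at hcon
  -- one vertex per level, injectively
  have hsurj : ∀ j : Fin (d+1), ∃ v, G.dist u v = j.1 := fun j =>
    exists_level hG u w (Nat.lt_succ_iff.mp j.2)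
  choose f hf using hsurj
  have hinj : Function.Injective f := by
    intro i j hij
    have : (i : ℕ) = j := by rw [← hf i, ← hf j, hij]
    exact Fin.ext this
  have hle : d + 1 ≤ n := by
    have := Fintype.card_le_of_injective f hinj
    simpa using this
  have hdn : d + 1 = n := by omega
  have hbij : Function.Bijective f :=
    (Fintype.bijective_iff_injective_and_card f).2 ⟨hinj, by simp [hdn]; exact hn⟩
  -- levels determine vertices
  have hlevinj : ∀ v₁ v₂ : V, G.dist u v₁ = G.dist u v₂ → v₁ = v₂ := by
    intro v₁ v₂ h12
    obtain ⟨j₁, rfl⟩ := hbij.2 v₁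
    obtain ⟨j₂, rfl⟩ := hbij.2 v₂
    rw [hf j₁, hf j₂] at h12
    exact congrArg f (Fin.ext h12)
  -- each interior level vertex is a cut vertex
  have hcutj : ∀ j : Fin (d+1), 1 ≤ j.1 → j.1 < d → IsCutVertex G (f j) := by
    intro j hj1 hj2
    intro hconn
    have hu' : u ≠ f j := by
      intro h
      have h1 : G.dist u (f j) = j.1 := hf j
      rw [← h] at h1
      have h0 : G.dist u u = 0 := SimpleGraph.dist_self
      omega
    have hw' : w ≠ f j := by
      intro h
      have h2 : G.dist u w = j.1 := by rw [h, hf j]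
      omega
    obtain ⟨p⟩ := hconn.preconnected ⟨u, hu'⟩ ⟨w, hw'⟩
    set W : G.Walk u w := p.map (SimpleGraph.Embedding.induce {x | x ≠ f j}).toHom with hW
    have hx : ∃ x ∈ W.support, G.dist u x = j.1 := by
      apply walk_cross hG u W j.1
      · simp [SimpleGraph.dist_self]
      · omega
    obtain ⟨x, hxs, hxd⟩ := hx
    have hxj : x = f j := hlevinj x (f j) (by rw [hxd, hf j])
    have hxs : x ∈ (p.map (SimpleGraph.Embedding.induce {x | x ≠ f j}).toHom).support := hxs
    rw [Walk.support_map] at hxs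
    obtain ⟨y, _, hy2⟩ := List.mem_map.mp hxs
    exact y.2 (by rw [← hy2] at hxj; exact hxj)
  -- count the cut vertices
  set e : ℕ → V := fun j => f ⟨min j d, by omega⟩ with he
  have hecut : ∀ j ∈ Finset.Ico 1 d, IsCutVertex G (e j) := by
    intro j hj
    rw [Finset.mem_Ico] at hj
    exact hcutj _ (by simp; omega) (by simp; omega)
  have hF : (Finset.Ico 1 d).image e ⊆ {x | IsCutVertex G x}.toFinset := by
    intro x hx
    rw [Finset.mem_image] at hx
    obtain ⟨j, hj, rfl⟩ := hx
    rw [Set.mem_toFinset]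
    exact hecut j hj
  have heinj : ∀ i ∈ Finset.Ico 1 d, ∀ j ∈ Finset.Ico 1 d, e i = e j → i = j := by
    intro i hi j hj hij
    rw [Finset.mem_Ico] at hi hj
    have := hinj hij
    have := Fin.val_eq_val (⟨min i d, by omega⟩ : Fin (d+1)) ⟨min j d, by omega⟩
    simp [Fin.ext_iff] at this ⊢
    have h2 : min i d = min j d := by
      have := hinj hij
      exact Fin.val_eq_of_eq this
    omega
  have hcard2 : d - 1 ≤ {x | IsCutVertex G x}.toFinset.card := by
    calc d - 1 = (Finset.Ico 1 d).card := by rw [Nat.card_Ico]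
      _ = ((Finset.Ico 1 d).image e).card := (Finset.card_image_of_injOn heinj).symm
      _ ≤ _ := Finset.card_le_card hF
  rw [← Set.ncard_eq_toFinset_card'] at hcard2
  rw [hcut] at hcard2
  omega

end Count

section Arith

def Tsum (d : ℕ) : ℕ := ∑ j ∈ Finset.range (d+1), min j (d - j)
def Msum (d : ℕ) : ℕ := ∑ j ∈ Finset.range (d+1), max j (d - j)

lemma Tsum_succ_succ (d : ℕ) : Tsum (d+2) = Tsum d + (d+1) := by
  unfold Tsum
  rw [show d+2+1 = (d+2)+1 from rfl, Finset.sum_range_succ' (fun j => min j (d + 2 - j)) (d+2)]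
  rw [Finset.sum_range_succ _ (d+1)]
  have h1 : ∑ j ∈ Finset.range (d+1), min (j+1) (d + 2 - (j+1))
      = ∑ j ∈ Finset.range (d+1), (min j (d - j) + 1) := by
    apply Finset.sum_congr rfl
    intro j hj
    rw [Finset.mem_range] at hj
    omega
  rw [h1, Finset.sum_add_distrib]
  simp

lemma Tsum_eq : ∀ d : ℕ, 4 * Tsum d + d % 2 = d ^ 2
  | 0 => by simp [Tsum]
  | 1 => by norm_num [Tsum, Finset.sum_range_succ]
  | (d+2) => by
      have ih := Tsum_eq d
      rw [Tsum_succ_succ]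
      have h2 : (d+2) ^ 2 = d ^ 2 + 4*d + 4 := by ring
      omega

lemma Msum_add_Tsum (d : ℕ) : Msum d + Tsum d = (d+1) * d := by
  unfold Msum Tsum
  rw [← Finset.sum_add_distrib]
  have h1 : ∀ j ∈ Finset.range (d+1), max j (d - j) + min j (d - j) = d := by
    intro j hj
    rw [Finset.mem_range] at hj
    omega
  rw [Finset.sum_congr rfl h1]
  simp [mul_comm]

lemma Msum_eq (d : ℕ) : 4 * Msum d = 3 * d ^ 2 + 4 * d + d % 2 := by
  have h1 := Msum_add_Tsum d
  have h2 := Tsum_eq d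
  have h3 : (d+1)*d = d^2 + d := by ring
  omega

lemma arith_main {n d : ℕ} (h5 : 5 ≤ n) (hd : d ≤ n - 2) :
    Msum d + (n - (d+1)) * d ≤ Msum (n-2) + (n-2) := by
  obtain ⟨k, rfl⟩ : ∃ k, n = k + 2 := ⟨n - 2, by omega⟩
  have hk : k + 2 - 2 = k := by omega
  rw [hk]
  have hd' : d ≤ k := by omega
  rcases Nat.eq_or_lt_of_le hd' with h | h
  · rw [← h]
    have h1 : d + 2 - (d + 1) = 1 := by omega
    rw [h1]
    omega
  · obtain ⟨e, rfl⟩ : ∃ e, k = d + (e+1) := ⟨k - d - 1, by omega⟩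
    have h1 : d + (e+1) + 2 - (d+1) = e + 2 := by omega
    rw [h1]
    have e1 := Msum_eq d
    have e2 := Msum_eq (d + (e+1))
    have hd2 : d % 2 ≤ 1 := by omega
    have hk2 : (d + (e+1)) % 2 ≤ 1 := by omega
    have hsq : (d+(e+1))^2 = d^2 + 2*(d*e) + 2*d + e^2 + 2*e + 1 := by ring
    nlinarith [e1, e2, hd2, hk2, hsq, Nat.zero_le (d*e), Nat.zero_le (e^2),
      Nat.zero_le ((d+(e+1)) % 2)]

end Arith

section Master
variable {V : Type*} [Fintype V] [DecidableEq V] {G : SimpleGraph V}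

lemma order3 (G : SimpleGraph V) (x y z : V) :
    ∃ u w t : V, ({u, w, t} : Set V) = {x, y, z} ∧
      G.dist u t ≤ G.dist u w ∧ G.dist w t ≤ G.dist u w ∧ G.dist w t ≤ G.dist u t := by
  have cxy : G.dist y x = G.dist x y := SimpleGraph.dist_comm
  have cxz : G.dist z x = G.dist x z := SimpleGraph.dist_comm
  have cyz : G.dist z y = G.dist y z := SimpleGraph.dist_comm
  have exy : ({x, y, z} : Set V) = {y, x, z} := by ext a; simp; tauto
  have exz : ({x, y, z} : Set V) = {z, y, x} := by ext a; simp; tauto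
  have eyz : ({x, y, z} : Set V) = {x, z, y} := by ext a; simp; tauto
  have ezx : ({x, y, z} : Set V) = {z, x, y} := by ext a; simp; tauto
  have eyzx : ({x, y, z} : Set V) = {y, z, x} := by ext a; simp; tauto
  rcases le_total (G.dist x y) (G.dist x z) with h1 | h1 <;>
    rcases le_total (G.dist x y) (G.dist y z) with h2 | h2 <;>
      rcases le_total (G.dist x z) (G.dist y z) with h3 | h3
  · exact ⟨z, y, x, ezx ▸ exz ▸ (by ext a; simp; tauto), by omega, by omega, by omega⟩
  · exact ⟨z, x, y, by ext a; simp; tauto, by omega, by omega, by omega⟩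
  · exact ⟨z, y, x, by ext a; simp; tauto, by omega, by omega, by omega⟩
  · exact ⟨x, z, y, by ext a; simp; tauto, by omega, by omega, by omega⟩
  · exact ⟨y, z, x, by ext a; simp; tauto, by omega, by omega, by omega⟩
  · exact ⟨y, z, x, by ext a; simp; tauto, by omega, by omega, by omega⟩
  · exact ⟨y, x, z, by ext a; simp; tauto, by omega, by omega, by omega⟩
  · exact ⟨x, y, z, rfl, by omega, by omega, by omega⟩

/-- Master bound for Part 1. -/
theorem sum_ecc_bound (hG : G.Connected) {n : ℕ} (h5 : 5 ≤ n)
    (hcard : Fintype.card V = n)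
    (hcut : {x | IsCutVertex G x}.ncard = n - 3) :
    ∑ v, ecc G v ≤ Msum (n-2) + (n-2) := by
  classical
  -- the set of non-cut vertices has exactly 3 elements
  have hcompl : {x | ¬ IsCutVertex G x}.ncard = 3 := by
    have h1 := Set.ncard_add_ncard_compl {x | IsCutVertex G x}
    have h2 : {x | IsCutVertex G x}ᶜ = {x | ¬ IsCutVertex G x} := by
      ext a; simp
    rw [h2, Nat.card_eq_fintype_card, hcard, hcut] at h1
    omega
  obtain ⟨x, y, z, hxy, hxz, hyz, hS⟩ := Set.ncard_eq_three.mp hcompl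
  obtain ⟨u, w, t, hset, hm1, hm2, hq⟩ := order3 G x y z
  rw [← hS] at hset
  have hmemu : ¬ IsCutVertex G u := by
    have : u ∈ ({u, w, t} : Set V) := by simp
    rw [hset] at this; exact this
  have hmemw : ¬ IsCutVertex G w := by
    have : w ∈ ({u, w, t} : Set V) := by simp
    rw [hset] at this; exact this
  have hmemt : ¬ IsCutVertex G t := by
    have : t ∈ ({u, w, t} : Set V) := by simp
    rw [hset] at this; exact this
  have hmem : ∀ s, ¬ IsCutVertex G s → s = u ∨ s = w ∨ s = t := by
    intro s hs
    have : s ∈ ({u, w, t} : Set V) := by rw [hset]; exact hs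
    simpa using this
  have hbound := ecc_le_key hG (by omega) hmemu hmemw hmemt hmem hm1 hm2 hq
  have hlev : ∀ v, G.dist u v ≤ G.dist u w := by
    intro v
    have h1 : G.dist u v ≤ ecc G u := dist_le_ecc u v
    have h2 := hbound u
    have h0 : G.dist u u = 0 := SimpleGraph.dist_self
    omega
  have hdle : G.dist u w ≤ n - 2 := by
    have := diam_le hG (by omega) (by rw [hcard]; exact hcut) u w hlev
    omega
  have hsum := sum_ecc_le_levels hG u w rfl hbound hlev
  have harith := arith_main h5 hdle
  rw [hcard] at hsum
  calc ∑ v, ecc G v ≤ _ := hsum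
    _ = Msum (G.dist u w) + (n - (G.dist u w + 1)) * G.dist u w := rfl
    _ ≤ Msum (n-2) + (n-2) := harith

end Master


section Pot
variable {V : Type*} {G : SimpleGraph V}

lemma walk_potential (φ : V → ℕ) (hφ : ∀ a b, G.Adj a b → φ b ≤ φ a + 1)
    {a b : V} (W : G.Walk a b) : φ b ≤ φ a + W.length := by
  induction W with
  | nil => simp
  | @cons x y c h p ih =>
    have := hφ x y h
    simp only [Walk.length_cons]
    omega

lemma dist_potential (φ : V → ℕ) (hφ : ∀ a b, G.Adj a b → φ b ≤ φ a + 1)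
    {a b : V} (hr : G.Reachable a b) : φ b ≤ φ a + G.dist a b := by
  obtain ⟨W, hW⟩ := hr.exists_walk_length_eq_dist
  have := walk_potential φ hφ W
  omega

end Pot

section Unl
variable {n : ℕ} (h5 : 5 ≤ n)

local notation "VV" => (Fin (n - 3) ⊕ Fin 3)
local notation "H" => UnlGraph n 3

lemma adj_ll {i j : Fin (n-3)} (h : i.val + 1 = j.val) :
    (UnlGraph n 3).Adj (Sum.inl i) (Sum.inl j) := by
  rw [UnlGraph, SimpleGraph.fromRel_adj]
  refine ⟨?_, Or.inl h⟩
  intro he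
  have : i = j := Sum.inl_injective he
  subst this
  omega

lemma adj_lr {i : Fin (n-3)} (h : i.val + 1 = n - 3) :
    (UnlGraph n 3).Adj (Sum.inl i) (Sum.inr (0 : Fin 3)) := by
  rw [UnlGraph, SimpleGraph.fromRel_adj]
  exact ⟨by simp, Or.inl ⟨h, rfl⟩⟩

lemma adj_rr {s t : Fin 3} (h : s.val + 1 = t.val ∨ (s.val = 0 ∧ t.val + 1 = 3)) :
    (UnlGraph n 3).Adj (Sum.inr s) (Sum.inr t) := by
  rw [UnlGraph, SimpleGraph.fromRel_adj]
  refine ⟨?_, Or.inl h⟩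
  intro he
  have : s = t := Sum.inr_injective he
  subst this
  omega

/-- characterization of adjacency -/
lemma adj_cases {p q : VV} (h : (UnlGraph n 3).Adj p q) :
    (∃ i j : Fin (n-3), (p = Sum.inl i ∧ q = Sum.inl j) ∧ (i.val + 1 = j.val ∨ j.val + 1 = i.val)) ∨
    (∃ (i : Fin (n-3)) (t : Fin 3), ((p = Sum.inl i ∧ q = Sum.inr t) ∨ (p = Sum.inr t ∧ q = Sum.inl i)) ∧ i.val + 1 = n - 3 ∧ t.val = 0) ∨
    (∃ s t : Fin 3, (p = Sum.inr s ∧ q = Sum.inr t)) := by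
  rw [UnlGraph, SimpleGraph.fromRel_adj] at h
  obtain ⟨hne, hr⟩ := h
  rcases p with i | s <;> rcases q with j | t
  · left
    refine ⟨i, j, ⟨rfl, rfl⟩, ?_⟩
    rcases hr with h | h
    · exact Or.inl h
    · exact Or.inr h
  · right; left
    refine ⟨i, t, Or.inl ⟨rfl, rfl⟩, ?_⟩
    rcases hr with h | h
    · exact h
    · exact absurd h (by simp)
  · right; left
    refine ⟨j, s, Or.inr ⟨rfl, rfl⟩, ?_⟩
    rcases hr with h | h
    · exact absurd h (by simp)
    · exact h
  · right; right
    exact ⟨s, t, rfl, rfl⟩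

include h5 in
lemma walk_exists : ∀ (m : ℕ) (i j : Fin (n-3)), i.val + m = j.val →
    ∃ W : (UnlGraph n 3).Walk (Sum.inl i) (Sum.inl j), W.length = m := by
  intro m
  induction m with
  | zero =>
    intro i j hij
    have : i = j := Fin.ext (by omega)
    subst this
    exact ⟨Walk.nil, rfl⟩
  | succ m ih =>
    intro i j hij
    have hj : j.val < n - 3 := j.2
    have hi1 : i.val + 1 < n - 3 := by omega
    obtain ⟨W, hW⟩ := ih ⟨i.val + 1, hi1⟩ j (by simp; omega)
    exact ⟨Walk.cons (adj_ll rfl) W, by simp [hW]⟩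

end Unl

section Unl2
variable {n : ℕ}

lemma dist_le_ecc' {V : Type*} [Fintype V] {G : SimpleGraph V} (v u : V) :
    G.dist v u ≤ ecc G v :=
  le_ciSup (Set.Finite.bddAbove (Set.finite_range _)) u

lemma walk_to_inr0 (h5 : 5 ≤ n) (i : Fin (n-3)) :
    ∃ W : (UnlGraph n 3).Walk (Sum.inl i) (Sum.inr (0:Fin 3)), W.length = (n - 4 - i.val) + 1 := by
  have hlast : n - 4 < n - 3 := by omega
  have hi := i.2
  obtain ⟨W, hW⟩ := walk_exists h5 (n - 4 - i.val) i ⟨n-4, hlast⟩ (by simp; omega)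
  refine ⟨W.append (Walk.cons (adj_lr (by simp; omega)) Walk.nil), ?_⟩
  simp [hW]

lemma reach_rr (s t : Fin 3) :
    ∃ W : (UnlGraph n 3).Walk (Sum.inr s) (Sum.inr t), W.length ≤ 1 := by
  fin_cases s <;> fin_cases t
  · exact ⟨Walk.nil, by simp⟩
  · exact ⟨Walk.cons (adj_rr (Or.inl rfl)) Walk.nil, by simp⟩
  · exact ⟨Walk.cons (adj_rr (Or.inr ⟨rfl, rfl⟩)) Walk.nil, by simp⟩
  · exact ⟨Walk.cons (adj_rr (n := n) (Or.inl rfl)).symm Walk.nil, by simp⟩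
  · exact ⟨Walk.nil, by simp⟩
  · exact ⟨Walk.cons (adj_rr (Or.inl rfl)) Walk.nil, by simp⟩
  · exact ⟨Walk.cons (adj_rr (n := n) (Or.inr ⟨rfl, rfl⟩)).symm Walk.nil, by simp⟩
  · exact ⟨Walk.cons (adj_rr (n := n) (Or.inl rfl)).symm Walk.nil, by simp⟩
  · exact ⟨Walk.nil, by simp⟩

lemma reach_all (h5 : 5 ≤ n) (a b : Fin (n-3) ⊕ Fin 3) : (UnlGraph n 3).Reachable a b := by
  have hub : ∀ v : Fin (n-3) ⊕ Fin 3, (UnlGraph n 3).Reachable v (Sum.inr (0:Fin 3)) := by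
    intro v
    rcases v with i | s
    · obtain ⟨W, _⟩ := walk_to_inr0 h5 i
      exact ⟨W⟩
    · obtain ⟨W, _⟩ := reach_rr s 0
      exact ⟨W⟩
  exact (hub a).trans (hub b).symm

lemma dist_ll (h5 : 5 ≤ n) {i j : Fin (n-3)} (hij : i.val ≤ j.val) :
    (UnlGraph n 3).dist (Sum.inl i) (Sum.inl j) ≤ j.val - i.val := by
  obtain ⟨W, hW⟩ := walk_exists h5 (j.val - i.val) i j (by omega)
  have := SimpleGraph.dist_le W
  omega

lemma dist_l_r0 (h5 : 5 ≤ n) (i : Fin (n-3)) :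
    (UnlGraph n 3).dist (Sum.inl i) (Sum.inr (0:Fin 3)) ≤ n - 3 - i.val := by
  obtain ⟨W, hW⟩ := walk_to_inr0 h5 i
  have := SimpleGraph.dist_le W
  have hi := i.2
  omega

lemma dist_l_rt (h5 : 5 ≤ n) (i : Fin (n-3)) (t : Fin 3) :
    (UnlGraph n 3).dist (Sum.inl i) (Sum.inr t) ≤ n - 2 - i.val := by
  obtain ⟨W1, hW1⟩ := walk_to_inr0 h5 i
  obtain ⟨W2, hW2⟩ := reach_rr (n := n) 0 t
  have := SimpleGraph.dist_le (W1.append W2)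
  rw [Walk.length_append] at this
  have hi := i.2
  omega

lemma dist_rr (s t : Fin 3) :
    (UnlGraph n 3).dist (Sum.inr s) (Sum.inr t) ≤ 1 := by
  obtain ⟨W, hW⟩ := reach_rr (n := n) s t
  have := SimpleGraph.dist_le W
  omega

def pot (n : ℕ) : (Fin (n-3) ⊕ Fin 3) → ℕ :=
  Sum.elim (fun i => i.val) (fun t => if t.val = 0 then n - 3 else n - 2)

lemma pot_lip (h5 : 5 ≤ n) : ∀ a b, (UnlGraph n 3).Adj a b → pot n b ≤ pot n a + 1 := by
  intro a b h
  rcases adj_cases h with ⟨i, j, ⟨rfl, rfl⟩, hij⟩ | ⟨i, t, hor, hi, ht⟩ | ⟨s, t, rfl, rfl⟩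
  · simp only [pot, Sum.elim_inl]
    omega
  · rcases hor with ⟨rfl, rfl⟩ | ⟨rfl, rfl⟩ <;>
      simp only [pot, Sum.elim_inl, Sum.elim_inr, ht, if_pos] <;> omega
  · simp only [pot, Sum.elim_inr]
    split_ifs <;> omega

lemma ecc_inl (h5 : 5 ≤ n) (i : Fin (n-3)) :
    ecc (UnlGraph n 3) (Sum.inl i) = max i.val (n - 2 - i.val) := by
  have hi := i.2
  apply le_antisymm
  · apply ciSup_le
    intro x
    rcases x with j | t
    · have hj := j.2
      rcases le_total i.val j.val with h | h
      · have := dist_ll h5 h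
        omega
      · have h2 := dist_ll h5 (i := j) (j := i) h
        rw [SimpleGraph.dist_comm (u := Sum.inl j)] at h2
        omega
    · have := dist_l_rt h5 i t
      omega
  · have hzero : (0 : ℕ) < n - 3 := by omega
    have h1 : i.val ≤ (UnlGraph n 3).dist (Sum.inl i) (Sum.inl ⟨0, hzero⟩) := by
      have := dist_potential (pot n) (pot_lip h5)
        (reach_all h5 (Sum.inl ⟨0, hzero⟩) (Sum.inl i))
      rw [SimpleGraph.dist_comm (u := Sum.inl i)]
      simpa [pot] using this
    have h2 : n - 2 - i.val ≤ (UnlGraph n 3).dist (Sum.inl i) (Sum.inr (1 : Fin 3)) := by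
      have := dist_potential (pot n) (pot_lip h5)
        (reach_all h5 (Sum.inl i) (Sum.inr (1 : Fin 3)))
      simp only [pot, Sum.elim_inl, Sum.elim_inr] at this
      norm_num at this
      omega
    have g1 := dist_le_ecc' (G := UnlGraph n 3) (Sum.inl i) (Sum.inl ⟨0, hzero⟩)
    have g2 := dist_le_ecc' (G := UnlGraph n 3) (Sum.inl i) (Sum.inr (1 : Fin 3))
    omega

lemma ecc_inr (h5 : 5 ≤ n) (t : Fin 3) :
    ecc (UnlGraph n 3) (Sum.inr t) = if t.val = 0 then n - 3 else n - 2 := by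
  have hzero : (0 : ℕ) < n - 3 := by omega
  have hlow : pot n (Sum.inr t) ≤ (UnlGraph n 3).dist (Sum.inr t) (Sum.inl ⟨0, hzero⟩) := by
    have := dist_potential (pot n) (pot_lip h5)
      (reach_all h5 (Sum.inl ⟨0, hzero⟩) (Sum.inr t))
    rw [SimpleGraph.dist_comm (u := Sum.inr t)]
    simpa [pot] using this
  have hup : ∀ x, (UnlGraph n 3).dist (Sum.inr t) x ≤ pot n (Sum.inr t) := by
    intro x
    rcases x with j | s
    · have hj := j.2
      have := dist_l_rt h5 j t
      rw [SimpleGraph.dist_comm (u := Sum.inr t)]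
      have h2 : (UnlGraph n 3).dist (Sum.inl j) (Sum.inr t) ≤ n - 2 := by omega
      by_cases ht : t.val = 0
      · -- sharper bound for t = 0
        have ht0 : t = (0 : Fin 3) := Fin.ext ht
        subst ht0
        have := dist_l_r0 h5 j
        simp only [pot, Sum.elim_inr]
        norm_num
        omega
      · simp only [pot, Sum.elim_inr, if_neg ht]
        omega
    · have := dist_rr (n := n) t s
      simp only [pot, Sum.elim_inr]
      split_ifs <;> omega
  have hle := ciSup_le hup
  have hge := le_trans hlow (dist_le_ecc' (G := UnlGraph n 3) (Sum.inr t) (Sum.inl ⟨0, hzero⟩))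
  have : ecc (UnlGraph n 3) (Sum.inr t) = pot n (Sum.inr t) := le_antisymm hle hge
  rw [this]
  simp [pot]

end Unl2


section TotalUnl
variable {n : ℕ}

lemma totalEcc_unl (h5 : 5 ≤ n) : totalEcc (UnlGraph n 3) = Msum (n-2) + (n-2) := by
  unfold totalEcc
  rw [Fintype.sum_sum_type]
  have h1 : ∑ i : Fin (n-3), ecc (UnlGraph n 3) (Sum.inl i)
      = ∑ j ∈ Finset.range (n-3), max j (n - 2 - j) := by
    rw [← Fin.sum_univ_eq_sum_range (fun j => max j (n-2-j)) (n-3)]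
    exact Finset.sum_congr rfl (fun i _ => ecc_inl h5 i)
  have h2 : ∑ t : Fin 3, ecc (UnlGraph n 3) (Sum.inr t) = (n-3) + ((n-2) + (n-2)) := by
    rw [Fin.sum_univ_three]
    rw [ecc_inr h5 0, ecc_inr h5 1, ecc_inr h5 2]
    norm_num
    omega
  rw [h1, h2]
  have hm : Msum (n-2) = (∑ j ∈ Finset.range (n-3), max j (n - 2 - j)) + (n-3) + ((n-3)+1) := by
    unfold Msum
    rw [show n - 2 + 1 = (n - 3) + 1 + 1 from by omega]
    rw [Finset.sum_range_succ, Finset.sum_range_succ]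
    have e1 : max (n-3) (n - 2 - (n-3)) = n - 3 := Nat.max_eq_left (by omega)
    have e2 : max ((n-3)+1) (n - 2 - ((n-3)+1)) = (n-3)+1 := Nat.max_eq_left (by omega)
    rw [e1, e2]
  omega

lemma sq_mod4 (k : ℕ) : ∃ q, k^2 = 4*q + k % 2 := by
  rcases Nat.even_or_odd k with ⟨m, hm⟩ | ⟨m, hm⟩
  · refine ⟨m*m, ?_⟩
    subst hm
    have h2 : (m+m)^2 = 4*(m*m) := by ring
    omega
  · refine ⟨m*m+m, ?_⟩
    subst hm
    have h2 : (2*m+1)^2 = 4*(m*m+m)+1 := by ring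
    omega

lemma Msum_formula (h5 : 5 ≤ n) : Msum (n-2) + (n-2) = (3*n^2 - 4*n - 3)/4 := by
  obtain ⟨k, rfl⟩ : ∃ k, n = k + 2 := ⟨n-2, by omega⟩
  have e : k + 2 - 2 = k := by omega
  rw [e]
  obtain ⟨q, hq⟩ := sq_mod4 k
  have e1 := Msum_eq k
  have h2 : (k+2)^2 = k^2 + 4*k + 4 := by ring
  omega

end TotalUnl

-- STATEMENT 19
theorem stmt19 {V : Type*} [Fintype V] (G : SimpleGraph V) (hG : G.Connected)
    (n : ℕ) (hn : 5 ≤ n) (hcard : Fintype.card V = n)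
    (hcut : {w | IsCutVertex G w}.ncard = n - 3) :
    totalEcc G ≤ totalEcc (UnlGraph n 3) ∧
    totalEcc (UnlGraph n 3) = (3 * n ^ 2 - 4 * n - 3) / 4 := by
  classical
  have hformula : totalEcc (UnlGraph n 3) = Msum (n-2) + (n-2) := totalEcc_unl hn
  constructor
  · have h1 : ∑ v, ecc G v ≤ Msum (n-2) + (n-2) := sum_ecc_bound hG hn hcard hcut
    rw [hformula]
    exact h1
  · rw [hformula]
    exact Msum_formula hn
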